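/- arXiv:2605.09556 — 4 statements merged into one kernel-verified Lean document; each statement's English description precedes it below -/
import Mathlib

section
/- For any n, m ≥ 1, the family of maps h_y : 𝔽₂ⁿ → 𝔽₂ᵐ given by h_y(x) = T_y · x, where T_y is the m × n Toeplitz matrix determined by a uniformly random vector y ∈ 𝔽₂^{n+m-1} (with (T_y)_{i,j} = y_{i-j} for indices i ∈ {0,…,m-1}, j ∈ {0,…,n-1}), is universal₂: for all distinct x, x' ∈ 𝔽₂ⁿ, the probability over uniform y that T_y · x = T_y · x' is at most 2^{-m}. -/
/-- The `m × n` Toeplitz matrix over `𝔽₂` determined by a vector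
`y ∈ 𝔽₂^{n+m-1}`, where `y` is re-indexed so that the matrix entry
`(i, j)` (corresponding to `y_{i-j}` for `i ∈ {0,…,m-1}`, `j ∈ {0,…,n-1}`)
is `y ⟨n - 1 + i - j⟩`. -/
def toeplitz (n m : ℕ) (y : Fin (n + m - 1) → ZMod 2) :
    Matrix (Fin m) (Fin n) (ZMod 2) :=
  Matrix.of fun i j => y ⟨n - 1 + i.val - j.val, by omega⟩

/-- The family of Toeplitz hash functions `h_y(x) = T_y · x` indexed by a
uniformly random seed `y ∈ 𝔽₂^{n+m-1}` is universal₂: for distinct inputs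
`x ≠ x'`, the probability of a collision is at most `2^{-m}`. -/
theorem toeplitz_universal₂ (n m : ℕ) (hn : 1 ≤ n) (hm : 1 ≤ m)
    (x x' : Fin n → ZMod 2) (hxx : x ≠ x') :
    ((Finset.univ.filter fun y : Fin (n + m - 1) → ZMod 2 =>
        (toeplitz n m y).mulVec x = (toeplitz n m y).mulVec x').card : ℝ)
      / 2 ^ (n + m - 1) ≤ (1 / 2 : ℝ) ^ m := by
  classical
  set z : Fin n → ZMod 2 := fun j => x j - x' j with hz
  have hzne : ∃ j, z j ≠ 0 := by
    by_contra h
    push_neg at h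
    apply hxx
    funext j
    have := h j
    simpa [hz, sub_eq_zero] using this
  obtain ⟨jw, hjw⟩ := hzne
  set T : Finset (Fin n) := Finset.univ.filter (fun j => z j ≠ 0) with hT
  have hTne : T.Nonempty := ⟨jw, by simp [hT, hjw]⟩
  set j0 : Fin n := T.min' hTne with hj0
  have hj0mem : z j0 ≠ 0 := by
    have := T.min'_mem hTne
    simpa [hT] using this
  have hj0min : ∀ j : Fin n, j < j0 → z j = 0 := by
    intro j hj
    by_contra hzj
    exact absurd (T.min'_le j (by simp [hT, hzj])) (not_le.mpr hj)
  have hidx : ∀ (i : Fin m) (j : Fin n), n - 1 + i.val - j.val < n + m - 1 := by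
    intro i j; omega
  set idx : Fin m → Fin n → Fin (n + m - 1) := fun i j => ⟨n - 1 + i.val - j.val, hidx i j⟩
    with hidxdef
  set special : Fin m → Fin (n + m - 1) := fun i => idx i j0 with hspecial
  have hspec_inj : Function.Injective special := by
    intro a b hab
    have h := congrArg Fin.val hab
    simp only [hspecial, hidxdef] at h
    have ha := a.isLt
    have hb := b.isLt
    have hj0n := j0.isLt
    exact Fin.ext (by omega)
  -- collision condition rewritten
  have hcond : ∀ y : Fin (n + m - 1) → ZMod 2,
      ((toeplitz n m y).mulVec x = (toeplitz n m y).mulVec x') ↔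
        ∀ i : Fin m, ∑ j : Fin n, y (idx i j) * z j = 0 := by
    intro y
    rw [funext_iff]
    apply forall_congr'
    intro i
    rw [← sub_eq_zero]
    have : (toeplitz n m y).mulVec x i - (toeplitz n m y).mulVec x' i
        = ∑ j : Fin n, y (idx i j) * z j := by
      simp only [Matrix.mulVec, dotProduct, toeplitz, Matrix.of_apply,
        ← Finset.sum_sub_distrib, ← mul_sub, hz, hidxdef]
    rw [this]
  -- key injectivity
  have key : ∀ y y' : Fin (n + m - 1) → ZMod 2,
      (∀ i : Fin m, ∑ j : Fin n, y (idx i j) * z j = 0) →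
      (∀ i : Fin m, ∑ j : Fin n, y' (idx i j) * z j = 0) →
      (∀ k, k ∉ Set.range special → y k = y' k) → y = y' := by
    intro y y' hy hy' hrest
    have main : ∀ N : ℕ, ∀ i : Fin m, i.val = N → y (special i) = y' (special i) := by
      intro N
      induction N using Nat.strong_induction_on with
      | _ N IH =>
        intro i hiN
        have hsum : ∑ j : Fin n, (y (idx i j) - y' (idx i j)) * z j = 0 := by
          simp only [sub_mul, Finset.sum_sub_distrib, hy i, hy' i, sub_zero]
        have hone : ∑ j : Fin n, (y (idx i j) - y' (idx i j)) * z j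
            = (y (idx i j0) - y' (idx i j0)) * z j0 := by
          refine Finset.sum_eq_single j0 ?_ (by simp)
          intro j _ hjne
          rcases lt_or_gt_of_ne hjne with hlt | hgt
          · rw [hj0min j hlt, mul_zero]
          · have hyy : y (idx i j) = y' (idx i j) := by
              by_cases hk : idx i j ∈ Set.range special
              · obtain ⟨i', hi'⟩ := hk
                have hval := congrArg Fin.val hi'
                simp only [hspecial, hidxdef] at hval
                have hgt' : j0.val < j.val := hgt
                have hi'lt : i'.val < N := by
                  have := i.isLt; have := i'.isLt; have := j.isLt; have := j0.isLt
                  omega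
                have := IH i'.val hi'lt i' rfl
                rw [← hi'] at *
                exact this
              · exact hrest _ hk
            rw [hyy, sub_self, zero_mul]
        rw [hone] at hsum
        rcases mul_eq_zero.mp hsum with h | h
        · exact sub_eq_zero.mp h
        · exact absurd h hj0mem
    funext k
    by_cases hk : k ∈ Set.range special
    · obtain ⟨i, hi⟩ := hk
      rw [← hi]
      exact main i.val i rfl
    · exact hrest _ hk
  -- counting
  set S : Finset (Fin (n + m - 1) → ZMod 2) :=
    Finset.univ.filter fun y => (toeplitz n m y).mulVec x = (toeplitz n m y).mulVec x' with hS
  have hcard : S.card ≤ 2 ^ (n - 1) := by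
    have hsub : Fintype.card {k : Fin (n + m - 1) // k ∉ Set.range special} = n - 1 := by
      rw [Fintype.card_subtype_compl]
      have hr : Fintype.card {k : Fin (n + m - 1) // k ∈ Set.range special} = m := by
        rw [Fintype.card_eq.mpr ⟨(Equiv.ofInjective special hspec_inj).symm⟩, Fintype.card_fin]
      rw [hr, Fintype.card_fin]
      omega
    have hf : Function.Injective
        (fun (y : ↥S) (k : {k : Fin (n + m - 1) // k ∉ Set.range special}) => y.val k.val) := by
      intro a b hab
      have ha := Finset.mem_filter.mp a.2
      have hb := Finset.mem_filter.mp b.2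
      apply Subtype.ext
      refine key a.1 b.1 ((hcond a.1).mp ha.2) ((hcond b.1).mp hb.2) ?_
      intro k hk
      exact congrFun hab ⟨k, hk⟩
    have hle := Fintype.card_le_of_injective _ hf
    rw [Fintype.card_coe, Fintype.card_fun, hsub] at hle
    simpa using hle
  have h2 : (2 : ℝ) ^ (n + m - 1) = 2 ^ (n - 1) * 2 ^ m := by
    rw [← pow_add]
    congr 1
    omega
  have hpos : (0 : ℝ) < 2 ^ (n + m - 1) := by positivity
  calc ((S.card : ℝ)) / 2 ^ (n + m - 1)
      ≤ (2 ^ (n - 1) : ℝ) / 2 ^ (n + m - 1) := by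
        gcongr
        exact_mod_cast hcard
    _ = (1 / 2 : ℝ) ^ m := by
        rw [h2, div_pow, one_pow]
        rw [div_eq_div_iff (by positivity) (by positivity)]
        ring
end

section
/- For any nonzero vector v ∈ 𝔽₂ⁿ, the map y ↦ T_y · v from 𝔽₂^{n+m-1} to 𝔽₂ᵐ (sending the defining vector y of an m × n Toeplitz matrix to the matrix-vector product with v) is a surjective 𝔽₂-linear map; in particular exactly 2^{n-1} of the 2^{n+m-1} vectors y satisfy T_y · v = 0. -/
private lemma toeplitz_key_sum (a b : ℕ → ZMod 2) (K q : ℕ)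
    (ha : ∀ t, q ≤ t → a t = 0) :
    ∑ t ∈ Finset.range q, (if t ≤ K then b (K - t) else 0) * a t
      = ∑ t ∈ Finset.range (K + 1), b (K - t) * a t := by
  have h1 : ∑ t ∈ Finset.range q, (if t ≤ K then b (K - t) else 0) * a t
      = ∑ t ∈ Finset.range (K + 1 + q), (if t ≤ K then b (K - t) else 0) * a t := by
    apply Finset.sum_subset
    · exact Finset.range_subset_range.2 (by omega)
    · intro t _ ht
      rw [ha t (by simpa using ht), mul_zero]
  have h2 : ∑ t ∈ Finset.range (K + 1 + q), (if t ≤ K then b (K - t) else 0) * a t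
      = ∑ t ∈ Finset.range (K + 1), (if t ≤ K then b (K - t) else 0) * a t := by
    rw [eq_comm]
    apply Finset.sum_subset (Finset.range_subset_range.2 (by omega))
    intro t _ hnt
    rw [if_neg (by simp at hnt; omega), zero_mul]
  have h3 : ∑ t ∈ Finset.range (K + 1), (if t ≤ K then b (K - t) else 0) * a t
      = ∑ t ∈ Finset.range (K + 1), b (K - t) * a t := by
    apply Finset.sum_congr rfl
    intro t ht
    rw [if_pos (by simp at ht; omega)]
  rw [h1, h2, h3]

private lemma toeplitz_reflect_sum (a b : ℕ → ZMod 2) (K : ℕ) :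
    ∑ t ∈ Finset.range (K + 1), b (K - t) * a t
      = ∑ t ∈ Finset.range (K + 1), a (K - t) * b t := by
  rw [← Finset.sum_range_reflect (fun t => a (K - t) * b t) (K + 1)]
  apply Finset.sum_congr rfl
  intro t ht
  simp only [Nat.add_sub_cancel]
  have ht' : t ≤ K := by simp at ht; omega
  rw [Nat.sub_sub_self ht', mul_comm]

/-- For any nonzero `v ∈ 𝔽₂ⁿ`, the map `y ↦ T_y · v` is a surjective `𝔽₂`-linear
map from `𝔽₂^{n+m-1}` to `𝔽₂ᵐ`; in particular exactly `2^{n-1}` of the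
`2^{n+m-1}` seeds `y` satisfy `T_y · v = 0`. -/
theorem toeplitz_seed_map_surjective (n m : ℕ) (hn : 1 ≤ n) (hm : 1 ≤ m)
    (v : Fin n → ZMod 2) (hv : v ≠ 0) :
    IsLinearMap (ZMod 2)
        (fun y : Fin (n + m - 1) → ZMod 2 => (toeplitz n m y).mulVec v) ∧
    Function.Surjective
        (fun y : Fin (n + m - 1) → ZMod 2 => (toeplitz n m y).mulVec v) ∧
    (Finset.univ.filter fun y : Fin (n + m - 1) → ZMod 2 =>
        (toeplitz n m y).mulVec v = 0).card = 2 ^ (n - 1) := by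
  classical
  -- maximal support index of v
  obtain ⟨j₀, hj₀v, hj₀max⟩ : ∃ j₀ : Fin n, v j₀ ≠ 0 ∧ ∀ j : Fin n, j₀ < j → v j = 0 := by
    have hvex : ∃ j : Fin n, v j ≠ 0 := by
      by_contra h
      push_neg at h
      exact hv (funext fun j => h j)
    obtain ⟨j₁, hj₁⟩ := hvex
    set S := Finset.univ.filter fun j : Fin n => v j ≠ 0 with hS
    have hne : S.Nonempty := ⟨j₁, by simp [hS, hj₁]⟩
    refine ⟨S.max' hne, ?_, ?_⟩
    · have := S.max'_mem hne
      simpa [hS] using this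
    · intro j hj
      by_contra hvj
      have hjS : j ∈ S := by simp [hS, hvj]
      exact absurd (S.le_max' j hjS) (not_le.2 hj)
  -- ℕ-indexed versions
  set v' : ℕ → ZMod 2 := fun t => if h : t < n then v ⟨t, h⟩ else 0 with hv'
  have hv'0 : ∀ t, j₀.val < t → v' t = 0 := by
    intro t ht
    simp only [hv']
    split
    · exact hj₀max ⟨t, ‹_›⟩ ht
    · rfl
  have hv'n : ∀ t, n ≤ t → v' t = 0 := by
    intro t ht
    simp only [hv']
    rw [dif_neg (by omega)]
  -- linearity
  have hlin : IsLinearMap (ZMod 2)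
      (fun y : Fin (n + m - 1) → ZMod 2 => (toeplitz n m y).mulVec v) := by
    constructor
    · intro y₁ y₂
      funext i
      simp [toeplitz, Matrix.mulVec, dotProduct, add_mul,
        Finset.sum_add_distrib]
    · intro c y
      funext i
      simp [toeplitz, Matrix.mulVec, dotProduct, Finset.mul_sum, mul_assoc]
  -- surjectivity
  have hsurj : Function.Surjective
      (fun y : Fin (n + m - 1) → ZMod 2 => (toeplitz n m y).mulVec v) := by
    intro z
    set B : Matrix (Fin m) (Fin m) (ZMod 2) :=
      Matrix.of fun i i' =>
        if i'.val ≤ j₀.val + i.val then v' (j₀.val + i.val - i'.val) else 0 with hB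
    have hBtri : B.BlockTriangular id := by
      intro i i' h
      have h' : i'.val < i.val := h
      simp only [hB, Matrix.of_apply]
      rw [if_pos (by omega)]
      exact hv'0 _ (by omega)
    have hBdet : IsUnit B.det := by
      rw [Matrix.det_of_upperTriangular hBtri]
      have hdiag : ∀ i : Fin m, B i i = v j₀ := by
        intro i
        simp only [hB, Matrix.of_apply]
        rw [if_pos (by omega), Nat.add_sub_cancel]
        simp only [hv']
        rw [dif_pos j₀.isLt]
      rw [Finset.prod_congr rfl fun i _ => hdiag i, Finset.prod_const]
      exact (isUnit_iff_ne_zero.2 hj₀v).pow _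
    set w : Fin m → ZMod 2 := B⁻¹.mulVec z with hw
    have hBw : B.mulVec w = z := by
      rw [hw, Matrix.mulVec_mulVec, Matrix.mul_nonsing_inv B hBdet,
        Matrix.one_mulVec]
    set w' : ℕ → ZMod 2 := fun t => if h : t < m then w ⟨t, h⟩ else 0 with hw'
    have hw'm : ∀ t, m ≤ t → w' t = 0 := by
      intro t ht
      simp only [hw']
      rw [dif_neg (by omega)]
    refine ⟨fun k => if n - 1 - j₀.val ≤ k.val
        then w' (k.val - (n - 1 - j₀.val)) else 0, ?_⟩
    funext i
    set K := j₀.val + i.val with hK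
    have step1 : (toeplitz n m (fun k => if n - 1 - j₀.val ≤ k.val
          then w' (k.val - (n - 1 - j₀.val)) else 0)).mulVec v i
        = ∑ t ∈ Finset.range n, (if t ≤ K then w' (K - t) else 0) * v' t := by
      rw [← Fin.sum_univ_eq_sum_range
        (fun t => (if t ≤ K then w' (K - t) else 0) * v' t) n]
      simp only [Matrix.mulVec, dotProduct, toeplitz, Matrix.of_apply]
      apply Finset.sum_congr rfl
      intro j _
      have hj : j.val < n := j.isLt
      have hj₀n : j₀.val < n := j₀.isLt
      congr 1
      · show (if n - 1 - j₀.val ≤ n - 1 + i.val - j.val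
            then w' ((n - 1 + i.val - j.val) - (n - 1 - j₀.val)) else 0)
            = if j.val ≤ K then w' (K - j.val) else 0
        by_cases h : j.val ≤ K
        · rw [if_pos (by omega), if_pos h]
          congr 1
          omega
        · rw [if_neg (by omega), if_neg h]
      · simp only [hv']
        rw [dif_pos hj]
    have step2 : z i = ∑ t ∈ Finset.range m, (if t ≤ K then v' (K - t) else 0) * w' t := by
      rw [← hBw]
      rw [← Fin.sum_univ_eq_sum_range
        (fun t => (if t ≤ K then v' (K - t) else 0) * w' t) m]
      simp only [Matrix.mulVec, dotProduct, hB, Matrix.of_apply]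
      apply Finset.sum_congr rfl
      intro i' _
      congr 1
      simp only [hw']
      rw [dif_pos i'.isLt]
    show (toeplitz n m (fun k => if n - 1 - j₀.val ≤ k.val
        then w' (k.val - (n - 1 - j₀.val)) else 0)).mulVec v i = z i
    rw [step1, step2, toeplitz_key_sum v' w' K n hv'n,
      toeplitz_key_sum w' v' K m hw'm, toeplitz_reflect_sum]
  refine ⟨hlin, hsurj, ?_⟩
  -- counting
  set F := IsLinearMap.mk' _ hlin with hF
  have hsurjF : Function.Surjective F := hsurj
  have hquot : Nat.card ((Fin (n + m - 1) → ZMod 2) ⧸ LinearMap.ker F) = 2 ^ m := by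
    rw [Nat.card_congr (F.quotKerEquivOfSurjective hsurjF).toEquiv]
    simp [Nat.card_pi, Nat.card_zmod]
  have h1 := Submodule.card_eq_card_quotient_mul_card (LinearMap.ker F)
  rw [hquot] at h1
  have h2 : Nat.card (Fin (n + m - 1) → ZMod 2) = 2 ^ (n + m - 1) := by
    simp [Nat.card_pi, Nat.card_zmod]
  rw [h2] at h1
  have hker : Nat.card (LinearMap.ker F) = 2 ^ (n - 1) := by
    have hpow : (2 : ℕ) ^ (n + m - 1) = 2 ^ (n - 1) * 2 ^ m := by
      rw [← pow_add]
      congr 1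
      omega
    have hmpos : 0 < (2 : ℕ) ^ m := Nat.pow_pos (by omega)
    exact Nat.eq_of_mul_eq_mul_right hmpos (by omega)
  have hfilter : (Finset.univ.filter fun y : Fin (n + m - 1) → ZMod 2 =>
        (toeplitz n m y).mulVec v = 0).card
      = Fintype.card {y : Fin (n + m - 1) → ZMod 2 // (toeplitz n m y).mulVec v = 0} :=
    (Fintype.card_subtype _).symm
  rw [hfilter, ← hker, Nat.card_eq_fintype_card]
  exact Fintype.card_congr (Equiv.subtypeEquivRight fun y => by
    simp [hF, LinearMap.mem_ker])
end

section
/- The modified Toeplitz family f_y(x) = (M_y, I_m)·x, with M_y the m × (n−m) Toeplitz matrix built from uniform y ∈ 𝔽₂^{n-1}, is 2-almost dual universal₂: for every nonzero x ∈ 𝔽₂ⁿ, the probability over uniform y that x ∈ (ker f_y)^⊥ is at most 2 · 2^{-(n-m)}. -/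
open Matrix

/-- The `m × (n-m)` Toeplitz matrix `M_y` over `𝔽₂` determined by
`y ∈ 𝔽₂^{n-1}`. -/
def modToeplitz (n m : ℕ) (y : Fin (n - 1) → ZMod 2) :
    Matrix (Fin m) (Fin (n - m)) (ZMod 2) :=
  Matrix.of fun i j => y ⟨n - m - 1 + i.val - j.val, by omega⟩

/-- First `n - m` bits of `x ∈ 𝔽₂ⁿ`. -/
def lowPart (n m : ℕ) (x : Fin n → ZMod 2) : Fin (n - m) → ZMod 2 :=
  fun j => x ⟨j.val, by omega⟩

/-- Last `m` bits of `x ∈ 𝔽₂ⁿ` (for `m ≤ n`). -/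
def highPart (n m : ℕ) (hm : m ≤ n) (x : Fin n → ZMod 2) : Fin m → ZMod 2 :=
  fun i => x ⟨n - m + i.val, by omega⟩

/-- The modified Toeplitz map `f_y(x) = (M_y, I_m) · x = M_y·x̲ ⊕ x̄`. -/
def modToeplitzMap (n m : ℕ) (hm : m ≤ n) (y : Fin (n - 1) → ZMod 2)
    (x : Fin n → ZMod 2) : Fin m → ZMod 2 :=
  (modToeplitz n m y).mulVec (lowPart n m x) + highPart n m hm x

lemma zmod2_add_self : ∀ a : ZMod 2, a + a = 0 := by decide

lemma zmod2_eq_one (a : ZMod 2) (h : a ≠ 0) : a = 1 := by revert h; revert a; decide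

/-- If `x ∈ (ker f_y)^⊥` then the Toeplitz linear equations hold. -/
lemma key_eq (n m : ℕ) (hm : m ≤ n) (x : Fin n → ZMod 2)
    (y : Fin (n - 1) → ZMod 2)
    (hy : ∀ v, modToeplitzMap n m hm y v = 0 → x ⬝ᵥ v = 0) (j : Fin (n - m)) :
    lowPart n m x j + ∑ i : Fin m, highPart n m hm x i * modToeplitz n m y i j = 0 := by
  set v : Fin n → ZMod 2 := fun t =>
    if h : t.val < n - m then (if t.val = j.val then 1 else 0)
    else modToeplitz n m y ⟨t.val - (n - m), by omega⟩ j with hv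
  have hker : modToeplitzMap n m hm y v = 0 := by
    funext i
    have hlow : lowPart n m v = fun j' : Fin (n - m) => if j' = j then 1 else 0 := by
      funext j'
      simp only [lowPart, hv, j'.isLt, dif_pos, Fin.ext_iff]
    have hmul : (modToeplitz n m y).mulVec (lowPart n m v) i = modToeplitz n m y i j := by
      rw [hlow]
      simp [mulVec, dotProduct]
    have hhigh : highPart n m hm v i = modToeplitz n m y i j := by
      simp only [highPart, hv]
      rw [dif_neg (by omega)]
      congr 1
      exact Fin.ext (by simp)
    simp only [modToeplitzMap, Pi.add_apply, hmul, hhigh, Pi.zero_apply]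
    exact zmod2_add_self _
  have hdot := hy v hker
  have hsplit : x ⬝ᵥ v =
      lowPart n m x j + ∑ i : Fin m, highPart n m hm x i * modToeplitz n m y i j := by
    have hn : (n - m) + m = n := Nat.sub_add_cancel hm
    rw [dotProduct]
    rw [← Fin.sum_congr' (fun t : Fin n => x t * v t) hn]
    rw [Fin.sum_univ_add]
    congr 1
    · have : ∀ l : Fin (n - m),
          x (Fin.cast hn (Fin.castAdd m l)) * v (Fin.cast hn (Fin.castAdd m l))
            = if l = j then lowPart n m x j else 0 := by
        intro l
        have hval : (Fin.cast hn (Fin.castAdd m l)).val = l.val := rfl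
        by_cases hl : l = j
        · subst hl
          rw [if_pos rfl]
          have hv1 : v (Fin.cast hn (Fin.castAdd m l)) = 1 := by
            simp only [hv, hval]
            simp
          rw [hv1, mul_one, lowPart]
          exact congrArg x (Fin.ext hval)
        · rw [if_neg hl]
          have : v (Fin.cast hn (Fin.castAdd m l)) = 0 := by
            simp only [hv, hval, l.isLt, dif_pos]
            rw [if_neg (by simpa [Fin.ext_iff] using hl)]
          rw [this, mul_zero]
      rw [Finset.sum_congr rfl fun l _ => this l, Finset.sum_ite_eq' Finset.univ j _]
      simp
    · apply Finset.sum_congr rfl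
      intro r _
      have hval : (Fin.cast hn (Fin.natAdd (n - m) r)).val = n - m + r.val := rfl
      have hvv : v (Fin.cast hn (Fin.natAdd (n - m) r)) = modToeplitz n m y r j := by
        simp only [hv, hval]
        rw [dif_neg (by omega)]
        congr 1
        exact Fin.ext (by simp)
      rw [hvv]
      rfl
  rw [hsplit] at hdot
  exact hdot

/-- Two seeds satisfying the same Toeplitz equations that agree off the pivot
window coincide. -/
lemma inj_core (n m : ℕ) (hnm : m < n) (lx : Fin (n - m) → ZMod 2)
    (hx : Fin m → ZMod 2) (k : Fin m) (hk : hx k ≠ 0)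
    (hmax : ∀ i, hx i ≠ 0 → i ≤ k) (y y' : Fin (n - 1) → ZMod 2)
    (hy : ∀ j, lx j + ∑ i : Fin m, hx i * modToeplitz n m y i j = 0)
    (hy' : ∀ j, lx j + ∑ i : Fin m, hx i * modToeplitz n m y' i j = 0)
    (hagree : ∀ t : Fin (n - 1),
      t.val < k.val ∨ n - m - 1 + k.val < t.val → y t = y' t) :
    y = y' := by
  have hnm1 : 1 ≤ n - m := by omega
  have H : ∀ t : ℕ, ∀ ht : t < n - 1, y ⟨t, ht⟩ = y' ⟨t, ht⟩ := by
    intro t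
    induction t using Nat.strong_induction_on with
    | _ t IH =>
      intro ht
      by_cases hpiv : t < k.val ∨ n - m - 1 + k.val < t
      · exact hagree ⟨t, ht⟩ hpiv
      · push_neg at hpiv
        obtain ⟨h1, h2⟩ := hpiv
        set j : Fin (n - m) := ⟨n - m - 1 + k.val - t, by omega⟩ with hj
        have e1 := hy j
        have e2 := hy' j
        have hsum : ∑ i : Fin m, hx i * modToeplitz n m y i j
            = ∑ i : Fin m, hx i * modToeplitz n m y' i j := by
          have := e1.trans e2.symm
          exact add_left_cancel this
        rw [← Finset.sum_erase_add _ _ (Finset.mem_univ k),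
            ← Finset.sum_erase_add _ _ (Finset.mem_univ k)] at hsum
        have herase : ∑ i ∈ Finset.univ.erase k, hx i * modToeplitz n m y i j
            = ∑ i ∈ Finset.univ.erase k, hx i * modToeplitz n m y' i j := by
          apply Finset.sum_congr rfl
          intro i hi
          by_cases hxi : hx i = 0
          · rw [hxi, zero_mul, zero_mul]
          · have hik : i.val < k.val := by
              have := hmax i hxi
              have hne : i ≠ k := (Finset.mem_erase.mp hi).1
              exact lt_of_le_of_ne (Fin.le_def.mp this) (by
                intro hc; exact hne (Fin.ext hc))
            congr 1
            show y ⟨n - m - 1 + i.val - j.val, _⟩ = y' ⟨n - m - 1 + i.val - j.val, _⟩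
            have hidx : n - m - 1 + i.val - j.val = t + i.val - k.val := by
              simp only [hj]; omega
            have hlt : t + i.val - k.val < t := by omega
            have hlt2 : t + i.val - k.val < n - 1 := by omega
            have := IH (t + i.val - k.val) hlt hlt2
            convert this using 2 <;> exact Fin.ext hidx
        rw [herase] at hsum
        have hterm := add_left_cancel hsum
        have hidxk : n - m - 1 + k.val - j.val = t := by simp only [hj]; omega
        rw [zmod2_eq_one (hx k) hk, one_mul, one_mul] at hterm
        have : y ⟨n - m - 1 + k.val - j.val, by omega⟩
            = y' ⟨n - m - 1 + k.val - j.val, by omega⟩ := hterm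
        convert this using 2 <;> exact Fin.ext hidxk.symm
  funext t
  have := H t.val t.isLt
  simpa using this

/-- Restriction of a seed to the (≤ m) non-pivot coordinates. -/
def phiAux (n m : ℕ) (k : Fin m) (y : Fin (n - 1) → ZMod 2) (i : Fin m) : ZMod 2 :=
  if h : i.val < k.val ∧ i.val < n - 1 then y ⟨i.val, h.2⟩
  else if h2 : n - m + i.val < n - 1 then y ⟨n - m + i.val, h2⟩ else 0

open Classical in
/-- The modified Toeplitz family `f_y(x) = (M_y, I_m)·x` with a uniform seed
`y ∈ 𝔽₂^{n-1}` is `2`-almost dual universal₂: for every nonzero `x ∈ 𝔽₂ⁿ`, the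
probability over `y` that `x ∈ (ker f_y)^⊥` is at most `2 · 2^{-(n-m)}`. -/
theorem modToeplitz_almost_dual_universal₂ (n m : ℕ) (hm : m ≤ n)
    (x : Fin n → ZMod 2) (hx : x ≠ 0) :
    ((Finset.univ.filter fun y : Fin (n - 1) → ZMod 2 =>
        ∀ v, modToeplitzMap n m hm y v = 0 → x ⬝ᵥ v = 0).card : ℝ)
      / 2 ^ (n - 1) ≤ 2 * (1 / 2 : ℝ) ^ (n - m) := by
  have hn1 : 1 ≤ n := by
    by_contra h
    push_neg at h
    interval_cases n
    exact hx (funext fun t => absurd t.isLt (by omega))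
  set S := Finset.univ.filter fun y : Fin (n - 1) → ZMod 2 =>
      ∀ v, modToeplitzMap n m hm y v = 0 → x ⬝ᵥ v = 0 with hS
  -- reduce to the cardinality bound `S.card ≤ 2 ^ m`
  suffices hcard : S.card ≤ 2 ^ m by
    have h1 : ((S.card : ℝ)) / 2 ^ (n - 1) ≤ (2 ^ m : ℝ) / 2 ^ (n - 1) := by
      gcongr
      exact_mod_cast hcard
    refine h1.trans (le_of_eq ?_)
    have key : (2:ℝ) ^ m * 2 ^ (n - m) = 2 * 2 ^ (n - 1) := by
      rw [← pow_add, ← pow_succ']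
      congr 1
      omega
    rw [div_eq_iff (by positivity : (2:ℝ) ^ (n-1) ≠ 0)]
    field_simp
    have h2 : (1/2:ℝ) ^ (n - m) * 2 ^ (n - m) = 1 := by rw [← mul_pow]; norm_num
    linear_combination (1/2:ℝ) ^ (n - m) * key - (2:ℝ) ^ m * h2
  -- trivial case `m = n`
  rcases eq_or_lt_of_le hm with hEq | hnm
  · calc S.card ≤ Fintype.card (Fin (n - 1) → ZMod 2) := Finset.card_le_univ S
    _ = 2 ^ (n - 1) := by simp
    _ ≤ 2 ^ m := Nat.pow_le_pow_right (by norm_num) (by omega)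
  by_cases hbar : highPart n m hm x = 0
  · -- the high part vanishes: the filter set is empty
    have hexists : ∃ t : Fin n, x t ≠ 0 := by
      by_contra h
      push_neg at h
      exact hx (funext fun t => h t)
    obtain ⟨t, hxt⟩ := hexists
    have htl : t.val < n - m := by
      by_contra hge
      push_neg at hge
      have h0 : highPart n m hm x ⟨t.val - (n - m), by omega⟩ = x t := by
        unfold highPart
        exact congrArg x (Fin.ext (by simp; omega))
      rw [hbar] at h0
      exact hxt ((Pi.zero_apply _).symm.trans h0).symm
    have hSempty : S = ∅ := by
      apply Finset.eq_empty_of_forall_notMem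
      intro y hy
      have hprop := (Finset.mem_filter.mp hy).2
      have := key_eq n m hm x y hprop ⟨t.val, htl⟩
      rw [hbar] at this
      simp only [Pi.zero_apply, zero_mul, Finset.sum_const_zero, add_zero] at this
      apply hxt
      rw [show t = (⟨t.val, t.isLt⟩ : Fin n) from rfl]
      exact this
    rw [hSempty]
    simp
  · -- main case: pick the top nonzero coordinate of the high part
    have hTne : (Finset.univ.filter fun i : Fin m => highPart n m hm x i ≠ 0).Nonempty := by
      rw [Finset.filter_nonempty_iff]
      obtain ⟨i, hi⟩ := Function.ne_iff.mp hbar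
      exact ⟨i, Finset.mem_univ i, hi⟩
    set T := Finset.univ.filter fun i : Fin m => highPart n m hm x i ≠ 0 with hT
    set k : Fin m := T.max' hTne with hkdef
    have hk : highPart n m hm x k ≠ 0 := (Finset.mem_filter.mp (T.max'_mem hTne)).2
    have hmax : ∀ i, highPart n m hm x i ≠ 0 → i ≤ k := fun i h =>
      T.le_max' i (Finset.mem_filter.mpr ⟨Finset.mem_univ i, h⟩)
    have hinj : Set.InjOn (phiAux n m k) S := by
      intro y1 hy1 y2 hy2 hphi
      have hp1 := (Finset.mem_filter.mp hy1).2
      have hp2 := (Finset.mem_filter.mp hy2).2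
      refine inj_core n m hnm (lowPart n m x) (highPart n m hm x) k hk hmax y1 y2
        (fun j => key_eq n m hm x y1 hp1 j) (fun j => key_eq n m hm x y2 hp2 j) ?_
      intro t htt
      rcases htt with h1 | h2
      · have hi : t.val < m := by omega
        have h := congrFun hphi ⟨t.val, hi⟩
        unfold phiAux at h
        rw [dif_pos ⟨h1, t.isLt⟩, dif_pos ⟨h1, t.isLt⟩] at h
        simpa using h
      · have hi : t.val - (n - m) < m := by omega
        have h := congrFun hphi ⟨t.val - (n - m), hi⟩
        unfold phiAux at h
        have hc1 : ¬((⟨t.val - (n - m), hi⟩ : Fin m).val < k.val ∧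
            (⟨t.val - (n - m), hi⟩ : Fin m).val < n - 1) := by
          simp only [not_and]
          intro hlt _
          omega
        have hc2 : n - m + (⟨t.val - (n - m), hi⟩ : Fin m).val < n - 1 := by
          simp only
          omega
        rw [dif_neg hc1, dif_neg hc1, dif_pos hc2, dif_pos hc2] at h
        have hidx : (⟨n - m + (⟨t.val - (n - m), hi⟩ : Fin m).val, hc2⟩ : Fin (n - 1)) = t :=
          Fin.ext (by simp; omega)
        rwa [hidx] at h
    calc S.card ≤ Fintype.card (Fin m → ZMod 2) := by
          have := Finset.card_le_card_of_injOn (phiAux n m k)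
            (fun a _ => Finset.mem_univ (phiAux n m k a)) hinj
          simpa using this
    _ = 2 ^ m := by simp
end

section
/- Counting bound for Toeplitz kernels containing a fixed vector: fix m ≤ n and a nonzero x ∈ 𝔽₂ⁿ. Among all 2^{n+m-1} Toeplitz matrices T_y of size m × n over 𝔽₂, exactly 2^{n-1} satisfy x ∈ ker(T_y); hence Pr_y[x ∈ ker T_y] = 2^{-m} exactly (not merely at most 2^{-m}). -/
/-- Fix `m ≤ n` and a nonzero `x ∈ 𝔽₂ⁿ`. Among all `2^{n+m-1}` Toeplitz matrices
`T_y` of size `m × n` over `𝔽₂`, exactly `2^{n-1}` satisfy `x ∈ ker T_y`; hence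
the probability over a uniform seed `y` that `T_y · x = 0` is exactly `2^{-m}`. -/
theorem toeplitz_kernel_count (n m : ℕ) (hm : m ≤ n)
    (x : Fin n → ZMod 2) (hx : x ≠ 0) :
    (Finset.univ.filter fun y : Fin (n + m - 1) → ZMod 2 =>
        (toeplitz n m y).mulVec x = 0).card = 2 ^ (n - 1) ∧
    ((Finset.univ.filter fun y : Fin (n + m - 1) → ZMod 2 =>
        (toeplitz n m y).mulVec x = 0).card : ℝ) / 2 ^ (n + m - 1)
      = (1 / 2 : ℝ) ^ m := by
  classical
  obtain ⟨j1, hj1⟩ : ∃ j, x j ≠ 0 := by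
    by_contra h; push_neg at h; exact hx (funext h)
  have hn : 1 ≤ n := j1.pos
  set S : Finset (Fin n) := Finset.univ.filter (fun j => x j ≠ 0) with hSdef
  have hS : S.Nonempty := ⟨j1, by simp [hSdef, hj1]⟩
  set j0 := S.min' hS with hj0def
  have hxj0 : x j0 ≠ 0 := by have := S.min'_mem hS; simpa [hSdef] using this
  have hxj0' : x j0 = 1 := by revert hxj0; generalize x j0 = a; revert a; decide
  have hmin : ∀ j : Fin n, j < j0 → x j = 0 := by
    intro j hj
    by_contra h
    exact absurd (S.min'_le j (by simp [hSdef, h])) (not_le.2 hj)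
  have hj0n : j0.val ≤ n - 1 := by have := j0.isLt; omega
  -- the linear map y ↦ T_y x
  let L : (Fin (n + m - 1) → ZMod 2) →ₗ[ZMod 2] (Fin m → ZMod 2) :=
    { toFun := fun y => (toeplitz n m y).mulVec x
      map_add' := fun y z => by
        show (toeplitz n m (y + z)).mulVec x
            = (toeplitz n m y).mulVec x + (toeplitz n m z).mulVec x
        have h : toeplitz n m (y + z) = toeplitz n m y + toeplitz n m z := rfl
        rw [h, Matrix.add_mulVec]
      map_smul' := fun c y => by
        show (toeplitz n m (c • y)).mulVec x = c • (toeplitz n m y).mulVec x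
        have h : toeplitz n m (c • y) = c • toeplitz n m y := rfl
        rw [h, Matrix.smul_mulVec] }
  set b := n - 1 - j0.val with hbdef
  -- section
  let R : (Fin m → ZMod 2) → (Fin (n + m - 1) → ZMod 2) := fun v k =>
    if h : b ≤ k.val ∧ k.val < b + m then v ⟨k.val - b, by omega⟩ else 0
  have hLR : ∀ v : Fin m → ZMod 2, L (R v) = 0 → v = 0 := by
    intro v hv
    by_contra hv0
    obtain ⟨i1, hi1⟩ : ∃ i, v i ≠ 0 := by
      by_contra h; push_neg at h; exact hv0 (funext h)
    set T : Finset (Fin m) := Finset.univ.filter (fun i => v i ≠ 0) with hTdef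
    have hT : T.Nonempty := ⟨i1, by simp [hTdef, hi1]⟩
    set i0 := T.min' hT with hi0def
    have hvi0 : v i0 ≠ 0 := by have := T.min'_mem hT; simpa [hTdef] using this
    have hminT : ∀ i : Fin m, i < i0 → v i = 0 := by
      intro i hi
      by_contra h
      exact absurd (T.min'_le i (by simp [hTdef, h])) (not_le.2 hi)
    have hkey : (L (R v)) i0 = v i0 := by
      show ((toeplitz n m (R v)).mulVec x) i0 = v i0
      rw [Matrix.mulVec, dotProduct]
      rw [Finset.sum_eq_single j0]
      · show (R v) ⟨n - 1 + i0.val - j0.val, _⟩ * x j0 = v i0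
        rw [hxj0', mul_one]
        show dite _ _ _ = v i0
        rw [dif_pos (by simp only [Fin.val_mk]; omega)]
        congr 1
        ext
        simp only [Fin.val_mk]
        omega
      · intro j _ hj
        show (R v) ⟨n - 1 + i0.val - j.val, _⟩ * x j = 0
        rcases lt_or_gt_of_ne hj with hlt | hgt
        · rw [hmin j hlt, mul_zero]
        · have hjv : j0.val < j.val := hgt
          have hjn : j.val ≤ n - 1 := by have := j.isLt; omega
          show dite _ _ _ * x j = 0
          split
          · next hcond =>
            apply mul_eq_zero_of_left
            apply hminT
            rw [Fin.lt_def]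
            simp only [Fin.val_mk] at hcond ⊢
            omega
          · rw [zero_mul]
      · intro h; exact absurd (Finset.mem_univ j0) h
    rw [hv] at hkey
    exact hvi0 (by simpa using hkey.symm)
  have hRsub : ∀ v w, R (v - w) = R v - R w := by
    intro v w; funext k
    show R (v - w) k = R v k - R w k
    simp only [R]
    split_ifs <;> simp
  have hinj : Function.Injective (fun v => L (R v)) := by
    intro v w h
    have h' : L (R v) = L (R w) := h
    have h2 : L (R (v - w)) = 0 := by
      rw [hRsub, map_sub, h', sub_self]
    have := hLR _ h2
    exact sub_eq_zero.mp this
  have hsurjg : Function.Surjective (fun v => L (R v)) :=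
    Finite.injective_iff_surjective.mp hinj
  have hsurj : Function.Surjective L := fun w => by
    obtain ⟨v, hv⟩ := hsurjg w; exact ⟨R v, hv⟩
  -- counting
  have hcardQ : Nat.card ((Fin (n + m - 1) → ZMod 2) ⧸ LinearMap.ker L) = 2 ^ m := by
    rw [Nat.card_congr (L.quotKerEquivOfSurjective hsurj).toEquiv]
    simp [Nat.card_eq_fintype_card]
  have htotal : Nat.card (Fin (n + m - 1) → ZMod 2) = 2 ^ (n + m - 1) := by
    simp [Nat.card_eq_fintype_card]
  have hmul := Submodule.card_eq_card_quotient_mul_card (LinearMap.ker L)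
  rw [htotal, hcardQ] at hmul
  have hker : Nat.card (LinearMap.ker L) = 2 ^ (n - 1) := by
    have h2 : 2 ^ (n - 1) * 2 ^ m = Nat.card (LinearMap.ker L) * 2 ^ m := by
      rw [← pow_add, ← hmul]; congr 1; omega
    exact (Nat.eq_of_mul_eq_mul_right (by positivity) h2).symm
  have hfilter : (Finset.univ.filter fun y : Fin (n + m - 1) → ZMod 2 =>
      (toeplitz n m y).mulVec x = 0).card = 2 ^ (n - 1) := by
    rw [← hker, Nat.card_eq_fintype_card]
    rw [Fintype.card_eq_nat_card]
    rw [← Nat.card_eq_finsetCard]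
    apply Nat.card_congr
    exact Equiv.subtypeEquiv (Equiv.refl _) (fun y => by
      simp [LinearMap.mem_ker, L])
  refine ⟨hfilter, ?_⟩
  rw [hfilter]
  have h1 : n + m - 1 = (n - 1) + m := by omega
  rw [h1]
  push_cast
  rw [pow_add]
  rw [div_mul_eq_div_div, div_self (by positivity), one_div, ← inv_pow]
  norm_num
end
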